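/- Let d ≥ 1 and consider the action of the group of positive reals on ℝ^d × ℝ^d given by t•(x, y) = (t·x, t⁻¹·y). Let M = {(a, b) ∈ ℝ^d × ℝ^d : ‖a‖ = ‖b‖}. Then for every (x, y) ∈ ℝ^d × ℝ^d the topological closure of the orbit {(t·x, t⁻¹·y) : t > 0} intersects M; moreover, if the orbit of (x, y) is closed, it intersects M in exactly one point. -/

import Mathlib

lemma kn_scale {a b : ℝ} (ha : 0 < a) (hb : 0 < b) :
    ∃ t : ℝ, 0 < t ∧ t * a = t⁻¹ * b ∧ ∀ s : ℝ, 0 < s → s * a = s⁻¹ * b → s = t := by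
  refine ⟨Real.sqrt (b / a), Real.sqrt_pos.mpr (div_pos hb ha), ?_, ?_⟩
  · have h2 : Real.sqrt (b / a) ^ 2 = b / a := Real.sq_sqrt (le_of_lt (div_pos hb ha))
    have ht : 0 < Real.sqrt (b / a) := Real.sqrt_pos.mpr (div_pos hb ha)
    have key : Real.sqrt (b / a) ^ 2 * a = b := by
      rw [h2]; field_simp
    rw [inv_mul_eq_div, eq_div_iff ht.ne']
    nlinarith [key]
  · intro s hs hsab
    have hs2 : s ^ 2 = b / a := by
      field_simp at hsab ⊢
      nlinarith
    rw [← hs2, Real.sqrt_sq hs.le]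

/-- **Kempf–Ness set.** For the action `t • (x,y) = (t·x, t⁻¹·y)` of the
positive reals on `ℝ^d × ℝ^d` and `M = {(a,b) : ‖a‖ = ‖b‖}`, the closure of every orbit meets
`M`; and a closed orbit meets `M` in exactly one point. -/
theorem kempf_ness_set_meets_orbits {d : ℕ} (hd : 1 ≤ d)
    (x y : EuclideanSpace ℝ (Fin d)) :
    (∃ p : EuclideanSpace ℝ (Fin d) × EuclideanSpace ℝ (Fin d),
        p ∈ closure {p : EuclideanSpace ℝ (Fin d) × EuclideanSpace ℝ (Fin d) |
            ∃ t : ℝ, 0 < t ∧ p = (t • x, t⁻¹ • y)} ∧ ‖p.1‖ = ‖p.2‖) ∧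
    (IsClosed {p : EuclideanSpace ℝ (Fin d) × EuclideanSpace ℝ (Fin d) |
          ∃ t : ℝ, 0 < t ∧ p = (t • x, t⁻¹ • y)} →
      ∃! p : EuclideanSpace ℝ (Fin d) × EuclideanSpace ℝ (Fin d),
        (∃ t : ℝ, 0 < t ∧ p = (t • x, t⁻¹ • y)) ∧ ‖p.1‖ = ‖p.2‖) := by
  set S := {p : EuclideanSpace ℝ (Fin d) × EuclideanSpace ℝ (Fin d) |
      ∃ t : ℝ, 0 < t ∧ p = (t • x, t⁻¹ • y)} with hS
  have hinv : Filter.Tendsto (fun n : ℕ => ((n : ℝ) + 1)⁻¹) Filter.atTop (nhds 0) := by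
    simpa [one_div] using (tendsto_one_div_add_atTop_nhds_zero_nat :
      Filter.Tendsto (fun n : ℕ => 1 / ((n : ℝ) + 1)) Filter.atTop (nhds 0))
  by_cases hx : x = 0
  · by_cases hy : y = 0
    · constructor
      · exact ⟨(x, y), subset_closure ⟨1, one_pos, by simp [hx, hy]⟩, by rw [hx, hy]⟩
      · intro _
        refine ⟨(0, 0), ⟨⟨1, one_pos, by simp [hx, hy]⟩, by simp⟩, ?_⟩
        rintro p ⟨⟨t, ht, rfl⟩, -⟩
        simp [hx, hy]
    · -- x = 0, y ≠ 0 : (0,0) is a limit; the orbit is not closed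
      have hmem : ((0, 0) : EuclideanSpace ℝ (Fin d) × EuclideanSpace ℝ (Fin d)) ∈ closure S := by
        have htend : Filter.Tendsto
            (fun n : ℕ => ((((n : ℝ) + 1) • x, ((n : ℝ) + 1)⁻¹ • y) :
              EuclideanSpace ℝ (Fin d) × EuclideanSpace ℝ (Fin d)))
            Filter.atTop (nhds (0, 0)) := by
          subst hx
          simp only [smul_zero]
          exact Filter.Tendsto.prodMk_nhds tendsto_const_nhds
            (by simpa using hinv.smul_const y)
        exact mem_closure_of_tendsto htend (Filter.Eventually.of_forall fun n =>
          ⟨(n : ℝ) + 1, by positivity, rfl⟩)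
      constructor
      · exact ⟨(0, 0), hmem, by simp⟩
      · intro hcl
        exfalso
        obtain ⟨t, ht, heq⟩ := hcl.closure_subset hmem
        have : (0 : EuclideanSpace ℝ (Fin d)) = t⁻¹ • y := congrArg Prod.snd heq
        exact hy (by simpa [smul_eq_zero, inv_eq_zero, ht.ne'] using this.symm)
  · by_cases hy : y = 0
    · -- x ≠ 0, y = 0 : (0,0) is a limit; the orbit is not closed
      have hmem : ((0, 0) : EuclideanSpace ℝ (Fin d) × EuclideanSpace ℝ (Fin d)) ∈ closure S := by
        have htend : Filter.Tendsto
            (fun n : ℕ => ((((n : ℝ) + 1)⁻¹ • x, (((n : ℝ) + 1)⁻¹)⁻¹ • y) :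
              EuclideanSpace ℝ (Fin d) × EuclideanSpace ℝ (Fin d)))
            Filter.atTop (nhds (0, 0)) := by
          subst hy
          simp only [smul_zero]
          exact Filter.Tendsto.prodMk_nhds (by simpa using hinv.smul_const x)
            tendsto_const_nhds
        exact mem_closure_of_tendsto htend (Filter.Eventually.of_forall fun n =>
          ⟨((n : ℝ) + 1)⁻¹, by positivity, rfl⟩)
      constructor
      · exact ⟨(0, 0), hmem, by simp⟩
      · intro hcl
        exfalso
        obtain ⟨t, ht, heq⟩ := hcl.closure_subset hmem
        have : (0 : EuclideanSpace ℝ (Fin d)) = t • x := congrArg Prod.fst heq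
        exact hx (by simpa [smul_eq_zero, ht.ne'] using this.symm)
    · -- generic case
      obtain ⟨t, ht, hteq, huniq⟩ := kn_scale (norm_pos_iff.mpr hx) (norm_pos_iff.mpr hy)
      have hnorm : ‖t • x‖ = ‖t⁻¹ • y‖ := by
        rw [norm_smul, norm_smul, Real.norm_eq_abs, Real.norm_eq_abs,
          abs_of_pos ht, abs_of_pos (inv_pos.mpr ht)]
        exact hteq
      have hmemS : ((t • x, t⁻¹ • y) :
          EuclideanSpace ℝ (Fin d) × EuclideanSpace ℝ (Fin d)) ∈ S := ⟨t, ht, rfl⟩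
      constructor
      · exact ⟨(t • x, t⁻¹ • y), subset_closure hmemS, hnorm⟩
      · intro _
        refine ⟨(t • x, t⁻¹ • y), ⟨⟨t, ht, rfl⟩, hnorm⟩, ?_⟩
        rintro p ⟨⟨s, hs, rfl⟩, hpnorm⟩
        have hsn : s * ‖x‖ = s⁻¹ * ‖y‖ := by
          have := hpnorm
          rwa [norm_smul, norm_smul, Real.norm_eq_abs, Real.norm_eq_abs,
            abs_of_pos hs, abs_of_pos (inv_pos.mpr hs)] at this
        rw [huniq s hs hsn]
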